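/- arXiv:1412.2034 — 6 statements merged into one kernel-verified Lean document; each statement's English description precedes it below -/
import Mathlib

section
/- For every finite simple graph G, the Min-start and Max-start game brush numbers differ by at most one: |bg(G) − b̂g(G)| ≤ 1. -/
open Classical

namespace BrushGame

variable {V : Type*}

/-- The number of neighbours of `x` in `G` that belong to the list `l`. -/
noncomputable def nbr [Fintype V] (G : SimpleGraph V) (x : V) (l : List V) : ℕ :=
  (Finset.univ.filter (fun u => G.Adj x u ∧ u ∈ l)).card

/-- The degree of `x` in `G`. -/
noncomputable def deg [Fintype V] (G : SimpleGraph V) (x : V) : ℕ :=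
  (Finset.univ.filter (fun u => G.Adj x u)).card

/-- `l` is a valid sequence of vertex firings starting from the brush assignment `c`:
the vertices of `l` fire in order; when a vertex fires, the number of brushes on it
(those from `c` plus one from each previously fired neighbour) is at least its number of
still-dirty neighbours. -/
def FiringSeq [Fintype V] (G : SimpleGraph V) (c : V → ℕ) (l : List V) : Prop :=
  l.Nodup ∧ ∀ i : Fin l.length,
    deg G (l.get i) ≤ c (l.get i) + 2 * nbr G (l.get i) (l.take i.1)

/-- Vertex `v` gets cleaned, starting from the assignment `c` of brushes. -/
def Cleaned [Fintype V] (G : SimpleGraph V) (c : V → ℕ) (v : V) : Prop :=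
  ∃ l, FiringSeq G c l ∧ v ∈ l

/-- All vertices are clean, i.e. the game is over. -/
def Over [Fintype V] (G : SimpleGraph V) (c : V → ℕ) : Prop := ∀ v, Cleaned G c v

/-- An upper bound on the number of turns of any brushing game on `G` (plus one). -/
noncomputable def fuel [Fintype V] (G : SimpleGraph V) : ℕ := (∑ v, deg G v) + 1

/-- The value (number of brushes placed from now on, under optimal play) of the brushing
game on `G` from the brush assignment `c`, with `n` turns of fuel remaining;
`mover = true` means that it is Min's turn to place a brush (on a dirty vertex),
`mover = false` that it is Max's turn.  The fuel never runs out along legal play when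
the game is started with fuel `fuel G`. -/
noncomputable def val [Fintype V] (G : SimpleGraph V) : Bool → ℕ → (V → ℕ) → ℕ
  | _, 0, _ => 0
  | mover, n + 1, c =>
    if Over G c then 0
    else if mover then
      1 + sInf {k | ∃ v, ¬ Cleaned G c v ∧ k = val G false n (Function.update c v (c v + 1))}
    else
      1 + sSup {k | ∃ v, ¬ Cleaned G c v ∧ k = val G true n (Function.update c v (c v + 1))}

/-- The game brush number of `G` starting from the initial configuration `f`, Min to move. -/
noncomputable def bgFrom [Fintype V] (G : SimpleGraph V) (f : V → ℕ) : ℕ :=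
  val G true (fuel G) f

/-- The game brush number of `G` starting from the initial configuration `f`, Max to move. -/
noncomputable def bghatFrom [Fintype V] (G : SimpleGraph V) (f : V → ℕ) : ℕ :=
  val G false (fuel G) f

/-- The (Min-start) game brush number of `G`. -/
noncomputable def bg [Fintype V] (G : SimpleGraph V) : ℕ := bgFrom G (fun _ => 0)

/-- The Max-start game brush number of `G`. -/
noncomputable def bghat [Fintype V] (G : SimpleGraph V) : ℕ := bghatFrom G (fun _ => 0)

/-- `G` can be cleaned by the configuration `f`. -/
def CleansBy [Fintype V] (G : SimpleGraph V) (f : V → ℕ) : Prop :=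
  ∃ l, FiringSeq G f l ∧ ∀ v : V, v ∈ l

/-- The brush number of `G`. -/
noncomputable def bNum [Fintype V] (G : SimpleGraph V) : ℕ :=
  sInf {k | ∃ f, CleansBy G f ∧ k = ∑ v, f v}

end BrushGame

namespace BrushGame

variable {V : Type*} [Fintype V] {G : SimpleGraph V}

lemma nbr_mono {x : V} {l₁ l₂ : List V} (h : ∀ y ∈ l₁, y ∈ l₂) :
    nbr G x l₁ ≤ nbr G x l₂ := by
  apply Finset.card_le_card
  intro u hu
  simp only [Finset.mem_filter] at hu ⊢
  exact ⟨hu.1, hu.2.1, h u hu.2.2⟩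

lemma firingSeq_mono {c c' : V → ℕ} (h : ∀ x, c x ≤ c' x) {l : List V}
    (hl : FiringSeq G c l) : FiringSeq G c' l :=
  ⟨hl.1, fun i => le_trans (hl.2 i) (by have := h (l.get i); omega)⟩

lemma cleaned_mono {c c' : V → ℕ} (h : ∀ x, c x ≤ c' x) {v : V}
    (hv : Cleaned G c v) : Cleaned G c' v := by
  obtain ⟨l, hl, hvl⟩ := hv
  exact ⟨l, firingSeq_mono h hl, hvl⟩

lemma over_mono {c c' : V → ℕ} (h : ∀ x, c x ≤ c' x) (ho : Over G c) : Over G c' :=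
  fun v => cleaned_mono h (ho v)

lemma firingSeq_merge {c c' : V → ℕ} {l l' : List V}
    (hl : FiringSeq G c l) (hl' : FiringSeq G c' l')
    (hc : ∀ x ∈ l', x ∉ l → c' x ≤ c x) :
    FiringSeq G c (l ++ l'.filter (fun x => x ∉ l)) := by
  classical
  set f := l'.filter (fun x => decide (x ∉ l)) with hf
  constructor
  · refine List.Nodup.append hl.1 (hl'.1.filter _) ?_
    intro x hx hxf
    have := List.of_mem_filter hxf
    simp only [decide_eq_true_eq] at this
    exact this hx
  · intro i
    by_cases hi : i.1 < l.length
    · have hget : (l ++ f).get i = l.get ⟨i.1, hi⟩ := by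
        simp [List.get_eq_getElem, List.getElem_append_left hi]
      have htake : (l ++ f).take i.1 = l.take i.1 :=
        List.take_append_of_le_length (le_of_lt hi)
      rw [hget, htake]
      exact hl.2 ⟨i.1, hi⟩
    · push_neg at hi
      have hlen := i.2
      simp only [List.length_append] at hlen
      have hi2 : i.1 - l.length < f.length := by omega
      set j := i.1 - l.length with hj
      have hij : i.1 = l.length + j := by omega
      have hxget : (l ++ f).get i = f.get ⟨j, hi2⟩ := by
        simp [List.get_eq_getElem, List.getElem_append_right hi]
        rfl
      set x := f.get ⟨j, hi2⟩ with hx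
      have hxf : x ∈ f := List.get_mem f ⟨j, hi2⟩
      have hxl' : x ∈ l' := List.mem_of_mem_filter hxf
      have hxnl : x ∉ l := by
        have := List.of_mem_filter hxf
        simpa using this
      obtain ⟨j', hj'⟩ := List.mem_iff_get.mp hxl'
      have hdecomp : f = (l'.take j'.1).filter (fun y => decide (y ∉ l))
          ++ x :: (l'.drop (j'.1+1)).filter (fun y => decide (y ∉ l)) := by
        conv_lhs => rw [hf, ← List.take_append_drop j'.1 l']
        rw [List.filter_append]
        congr 1
        have hj'' : l'[j'.1] = x := by simpa [List.get_eq_getElem] using hj'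
        rw [List.drop_eq_getElem_cons j'.2, hj'', List.filter_cons]
        simp [hxnl]
      set k := ((l'.take j'.1).filter (fun y => decide (y ∉ l))).length with hk
      have hkf : k < f.length := by
        rw [hdecomp]
        simp only [List.length_append, List.length_cons]
        omega
      have hfk : f.get ⟨k, hkf⟩ = x := by
        simp only [List.get_eq_getElem]
        have heq := List.getElem_of_eq hdecomp (i := k) hkf
        rw [heq, List.getElem_append_right hk.ge]
        simp [hk]
      have hnodupf : f.Nodup := hl'.1.filter _
      have hjk : j = k := by
        have := (hnodupf.get_inj_iff (i := ⟨j, hi2⟩) (j := ⟨k, hkf⟩)).mp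
          (by rw [hfk, ← hx])
        exact Fin.mk.inj_iff.mp this
      have htakef : f.take j = (l'.take j'.1).filter (fun y => decide (y ∉ l)) := by
        conv_lhs => rw [hjk, hdecomp, hk]
        exact List.take_left
      have hsub : ∀ y ∈ l'.take j'.1, y ∈ (l ++ f).take i.1 := by
        intro y hy
        have htake2 : (l ++ f).take i.1 = l ++ f.take j := by
          rw [hij]
          exact List.take_length_add_append j
        rw [htake2]
        by_cases hyl : y ∈ l
        · exact List.mem_append_left _ hyl
        · refine List.mem_append_right _ ?_
          rw [htakef]
          exact List.mem_filter.mpr ⟨hy, by simpa using hyl⟩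
      have h1 := hl'.2 j'
      rw [hj'] at h1
      have h2 : c' x ≤ c x := hc x hxl' hxnl
      have h3 : nbr G x (l'.take j'.1) ≤ nbr G x ((l ++ f).take i.1) := nbr_mono hsub
      rw [hxget]
      omega

lemma le_update (c : V → ℕ) (v : V) :
    ∀ x, c x ≤ Function.update c v (c v + 1) x := by
  intro x
  by_cases h : x = v <;> simp [Function.update, h]

lemma update_le_update {c c' : V → ℕ} (h : ∀ x, c x ≤ c' x) (v : V) :
    ∀ x, Function.update c v (c v + 1) x ≤ Function.update c' v (c' v + 1) x := by
  intro x
  by_cases hx : x = v <;> simp [Function.update, hx, h x, h v]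

lemma cleaned_update_iff {c : V → ℕ} {v : V} (hv : Cleaned G c v) (u : V) :
    Cleaned G (Function.update c v (c v + 1)) u ↔ Cleaned G c u := by
  constructor
  · rintro ⟨l', hl', hul'⟩
    obtain ⟨l, hl, hvl⟩ := hv
    refine ⟨l ++ l'.filter (fun x => x ∉ l), firingSeq_merge hl hl' ?_, ?_⟩
    · intro x hx hxl
      have hxv : x ≠ v := fun h => hxl (h ▸ hvl)
      simp [Function.update, hxv]
    · by_cases hul : u ∈ l
      · exact List.mem_append_left _ hul
      · exact List.mem_append_right _ (List.mem_filter.mpr ⟨hul', by simpa using hul⟩)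
  · exact cleaned_mono (le_update c v)

lemma over_update_iff {c : V → ℕ} {v : V} (hv : Cleaned G c v) :
    Over G (Function.update c v (c v + 1)) ↔ Over G c :=
  ⟨fun h u => (cleaned_update_iff hv u).mp (h u), over_mono (le_update c v)⟩

lemma val_succ (m : Bool) (n : ℕ) (c : V → ℕ) :
    val G m (n+1) c = if Over G c then 0
    else if m then
      1 + sInf {k | ∃ v, ¬ Cleaned G c v ∧ k = val G false n (Function.update c v (c v + 1))}
    else
      1 + sSup {k | ∃ v, ¬ Cleaned G c v ∧ k = val G true n (Function.update c v (c v + 1))} := by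
  rw [val]

lemma val_update_cleaned :
    ∀ (n : ℕ) (m : Bool) (c : V → ℕ) (v : V), Cleaned G c v →
      val G m n (Function.update c v (c v + 1)) = val G m n c := by
  intro n
  induction n with
  | zero => intro m c v _; rfl
  | succ n ih =>
    intro m c v hv
    rw [val_succ, val_succ]
    by_cases ho : Over G c
    · rw [if_pos ho, if_pos ((over_update_iff hv).mpr ho)]
    · rw [if_neg ho, if_neg (fun h => ho ((over_update_iff hv).mp h))]
      set cv := Function.update c v (c v + 1) with hcv
      have key : ∀ (m' : Bool) (w : V), ¬ Cleaned G c w →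
          val G m' n (Function.update cv w (cv w + 1))
            = val G m' n (Function.update c w (c w + 1)) := by
        intro m' w hw
        have hvw : v ≠ w := fun h => hw (h ▸ hv)
        have hcvw : cv w = c w := by simp [hcv, Function.update, (Ne.symm hvw : w ≠ v)]
        have hupd : (Function.update c w (c w + 1)) v = c v :=
          Function.update_of_ne hvw _ _
        have hcomm : Function.update cv w (cv w + 1)
            = Function.update (Function.update c w (c w + 1)) v
                ((Function.update c w (c w + 1)) v + 1) := by
          rw [hcvw, hupd, hcv, Function.update_comm hvw]
        rw [hcomm]
        exact ih m' (Function.update c w (c w + 1)) v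
          (cleaned_mono (le_update c w) hv)
      have hsets : ∀ m' : Bool,
          {k | ∃ w, ¬ Cleaned G cv w ∧ k = val G m' n (Function.update cv w (cv w + 1))}
            = {k | ∃ w, ¬ Cleaned G c w ∧ k = val G m' n (Function.update c w (c w + 1))} := by
        intro m'
        ext k
        constructor
        · rintro ⟨w, hw, rfl⟩
          have hw' : ¬ Cleaned G c w := fun h => hw ((cleaned_update_iff hv w).mpr h)
          exact ⟨w, hw', key m' w hw'⟩
        · rintro ⟨w, hw, rfl⟩
          exact ⟨w, fun h => hw ((cleaned_update_iff hv w).mp h), (key m' w hw).symm⟩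
      cases m <;> simp only [if_true, if_false, Bool.false_eq_true] <;> rw [hsets]

lemma moveset_finite (m : Bool) (n : ℕ) (c : V → ℕ) :
    {k | ∃ v, ¬ Cleaned G c v ∧ k = val G m n (Function.update c v (c v + 1))}.Finite := by
  apply Set.Finite.subset (Set.finite_range (fun v => val G m n (Function.update c v (c v + 1))))
  rintro k ⟨v, -, rfl⟩
  exact ⟨v, rfl⟩

lemma val_le_of_le :
    ∀ (n : ℕ) (m : Bool) (c c' : V → ℕ), (∀ x, c x ≤ c' x) →
      val G m n c' ≤ val G m n c := by
  intro n
  induction n with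
  | zero => intro m c c' _; exact le_refl 0
  | succ n ih =>
    intro m c c' h
    rw [val_succ, val_succ]
    by_cases ho' : Over G c'
    · simp [ho']
    · have ho : ¬ Over G c := fun hh => ho' (over_mono h hh)
      rw [if_neg ho', if_neg ho]
      obtain ⟨u, hu⟩ := not_forall.mp ho'
      have hu2 : ¬ Cleaned G c u := fun hh => hu (cleaned_mono h hh)
      cases m with
      | true =>
        simp only [if_true]
        have hne : {k | ∃ v, ¬ Cleaned G c v ∧
            k = val G false n (Function.update c v (c v + 1))}.Nonempty := ⟨_, u, hu2, rfl⟩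
        obtain ⟨w, hw, hwe⟩ := Nat.sInf_mem hne
        rw [hwe]
        by_cases hw' : Cleaned G c' w
        · have t1 : sInf {k | ∃ v, ¬ Cleaned G c' v ∧
              k = val G false n (Function.update c' v (c' v + 1))}
                ≤ val G false n (Function.update c' u (c' u + 1)) :=
            Nat.sInf_le ⟨u, hu, rfl⟩
          have t2 : val G false n (Function.update c' u (c' u + 1)) ≤ val G false n c' :=
            ih false c' _ (le_update c' u)
          have t3 : val G false n c'
              = val G false n (Function.update c' w (c' w + 1)) :=
            (val_update_cleaned n false c' w hw').symm
          have t4 : val G false n (Function.update c' w (c' w + 1))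
              ≤ val G false n (Function.update c w (c w + 1)) :=
            ih false _ _ (update_le_update h w)
          omega
        · have t1 : sInf {k | ∃ v, ¬ Cleaned G c' v ∧
              k = val G false n (Function.update c' v (c' v + 1))}
                ≤ val G false n (Function.update c' w (c' w + 1)) :=
            Nat.sInf_le ⟨w, hw', rfl⟩
          have t2 : val G false n (Function.update c' w (c' w + 1))
              ≤ val G false n (Function.update c w (c w + 1)) :=
            ih false _ _ (update_le_update h w)
          omega
      | false =>
        simp only [Bool.false_eq_true, if_false]
        have hne' : {k | ∃ v, ¬ Cleaned G c' v ∧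
            k = val G true n (Function.update c' v (c' v + 1))}.Nonempty := ⟨_, u, hu, rfl⟩
        obtain ⟨w, hw, hwe⟩ := hne'.csSup_mem (moveset_finite true n c')
        rw [hwe]
        have hw2 : ¬ Cleaned G c w := fun hh => hw (cleaned_mono h hh)
        have t1 : val G true n (Function.update c' w (c' w + 1))
            ≤ val G true n (Function.update c w (c w + 1)) :=
          ih true _ _ (update_le_update h w)
        have t2 : val G true n (Function.update c w (c w + 1))
            ≤ sSup {k | ∃ v, ¬ Cleaned G c v ∧
              k = val G true n (Function.update c v (c v + 1))} :=
          le_csSup (moveset_finite true n c).bddAbove ⟨w, hw2, rfl⟩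
        omega

lemma val_mono_fuel :
    ∀ (n : ℕ) (m : Bool) (c : V → ℕ), val G m n c ≤ val G m (n+1) c := by
  intro n
  induction n with
  | zero => intro m c; exact Nat.zero_le _
  | succ n ih =>
    intro m c
    rw [val_succ, val_succ]
    by_cases ho : Over G c
    · simp [ho]
    · rw [if_neg ho, if_neg ho]
      obtain ⟨u, hu⟩ := not_forall.mp ho
      cases m with
      | true =>
        simp only [if_true]
        have hne : {k | ∃ v, ¬ Cleaned G c v ∧
            k = val G false (n+1) (Function.update c v (c v + 1))}.Nonempty := ⟨_, u, hu, rfl⟩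
        obtain ⟨w, hw, hwe⟩ := Nat.sInf_mem hne
        rw [hwe]
        have t1 : sInf {k | ∃ v, ¬ Cleaned G c v ∧
            k = val G false n (Function.update c v (c v + 1))}
              ≤ val G false n (Function.update c w (c w + 1)) :=
          Nat.sInf_le ⟨w, hw, rfl⟩
        have t2 := ih false (Function.update c w (c w + 1))
        omega
      | false =>
        simp only [Bool.false_eq_true, if_false]
        have hne : {k | ∃ v, ¬ Cleaned G c v ∧
            k = val G true n (Function.update c v (c v + 1))}.Nonempty := ⟨_, u, hu, rfl⟩
        have hb : sSup {k | ∃ v, ¬ Cleaned G c v ∧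
            k = val G true n (Function.update c v (c v + 1))}
              ≤ sSup {k | ∃ v, ¬ Cleaned G c v ∧
            k = val G true (n+1) (Function.update c v (c v + 1))} := by
          apply csSup_le hne
          rintro k ⟨v, hv, rfl⟩
          exact le_trans (ih true _)
            (le_csSup (moveset_finite true (n+1) c).bddAbove ⟨v, hv, rfl⟩)
        omega

end BrushGame

/-- For every finite simple graph `G`, the Min-start and Max-start game
brush numbers differ by at most one. -/
theorem game_brush_number_min_max_diff_le_one {V : Type*} [Fintype V] (G : SimpleGraph V) :
    |(BrushGame.bg G : ℤ) - (BrushGame.bghat G : ℤ)| ≤ 1 := by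

  classical
  have h1 : BrushGame.bghat G ≤ BrushGame.bg G + 1 := by
    show BrushGame.val G false ((∑ v, BrushGame.deg G v) + 1) (fun _ => 0)
      ≤ BrushGame.val G true ((∑ v, BrushGame.deg G v) + 1) (fun _ => 0) + 1
    set n := ∑ v, BrushGame.deg G v with hn
    set c0 : V → ℕ := fun _ => 0 with hc0
    rw [BrushGame.val_succ]
    by_cases ho : BrushGame.Over G c0
    · simp [ho]
    · rw [if_neg ho]
      simp only [Bool.false_eq_true, if_false]
      obtain ⟨u, hu⟩ := not_forall.mp ho
      have hne : {k | ∃ v, ¬ BrushGame.Cleaned G c0 v ∧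
          k = BrushGame.val G true n (Function.update c0 v (c0 v + 1))}.Nonempty :=
        ⟨_, u, hu, rfl⟩
      have hb : sSup {k | ∃ v, ¬ BrushGame.Cleaned G c0 v ∧
          k = BrushGame.val G true n (Function.update c0 v (c0 v + 1))}
            ≤ BrushGame.val G true (n+1) c0 := by
        apply csSup_le hne
        rintro k ⟨v, hv, rfl⟩
        exact le_trans (BrushGame.val_le_of_le n true c0 _ (BrushGame.le_update c0 v))
          (BrushGame.val_mono_fuel n true c0)
      omega
  have h2 : BrushGame.bg G ≤ BrushGame.bghat G + 1 := by
    show BrushGame.val G true ((∑ v, BrushGame.deg G v) + 1) (fun _ => 0)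
      ≤ BrushGame.val G false ((∑ v, BrushGame.deg G v) + 1) (fun _ => 0) + 1
    set n := ∑ v, BrushGame.deg G v with hn
    set c0 : V → ℕ := fun _ => 0 with hc0
    rw [BrushGame.val_succ]
    by_cases ho : BrushGame.Over G c0
    · simp [ho]
    · rw [if_neg ho]
      simp only [if_true]
      obtain ⟨u, hu⟩ := not_forall.mp ho
      have t1 : sInf {k | ∃ v, ¬ BrushGame.Cleaned G c0 v ∧
          k = BrushGame.val G false n (Function.update c0 v (c0 v + 1))}
            ≤ BrushGame.val G false n (Function.update c0 u (c0 u + 1)) :=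
        Nat.sInf_le ⟨u, hu, rfl⟩
      have t2 : BrushGame.val G false n (Function.update c0 u (c0 u + 1))
          ≤ BrushGame.val G false n c0 :=
        BrushGame.val_le_of_le n false c0 _ (BrushGame.le_update c0 u)
      have t3 := BrushGame.val_mono_fuel (G := G) n false c0
      omega
  rw [abs_le]
  constructor <;> omega
end

section
/- For every positive integer k, the star K_{1,3k−1} (one center joined to 3k−1 leaves) satisfies bg(K_{1,3k−1}) = 2k − 1 and b̂g(K_{1,3k−1}) = 2k. -/
open Classical

/- ===== Auxiliary development for the star graph ===== -/

noncomputable def cnt {α : Type*} [Fintype α] (p : α → Prop) : ℕ :=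
  (@Finset.filter α p (fun _ => Classical.propDecidable _) Finset.univ).card

lemma cnt_congr {α : Type*} [Fintype α] {p q : α → Prop} (h : ∀ a, p a ↔ q a) :
    cnt p = cnt q := by
  unfold cnt; congr 1; ext a; simp [h a]

lemma cnt_le_cnt {α : Type*} [Fintype α] {p q : α → Prop} (h : ∀ a, p a → q a) :
    cnt p ≤ cnt q := by
  unfold cnt; apply Finset.card_le_card; intro a; simp_all

lemma cnt_eq_card {α : Type*} [Fintype α] {p : α → Prop} (h : ∀ a, p a) :
    cnt p = Fintype.card α := by
  unfold cnt
  rw [Finset.filter_true_of_mem (fun a _ => h a)]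
  exact Finset.card_univ

lemma cnt_eq_zero {α : Type*} [Fintype α] {p : α → Prop} (h : ∀ a, ¬ p a) : cnt p = 0 := by
  unfold cnt
  rw [Finset.filter_false_of_mem (fun a _ => h a), Finset.card_empty]

lemma cnt_insert {α : Type*} [Fintype α] {p : α → Prop} {b : α} (hb : ¬ p b) :
    cnt (fun a => p a ∨ a = b) = cnt p + 1 := by
  unfold cnt
  have : (@Finset.filter α (fun a => p a ∨ a = b) (fun _ => Classical.propDecidable _) Finset.univ)
      = insert b (@Finset.filter α p (fun _ => Classical.propDecidable _) Finset.univ) := by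
    ext a
    by_cases hab : a = b <;> simp [hab, hb]
  rw [this, Finset.card_insert_of_notMem (by simp [hb])]

lemma cnt_eq_card_subtype {α : Type*} [Fintype α] (p : α → Prop) :
    cnt p = Fintype.card {x // p x} := by
  classical
  unfold cnt
  rw [Fintype.card_subtype]

lemma cnt_sum {α β : Type*} [Fintype α] [Fintype β] (P : α ⊕ β → Prop) :
    cnt P = cnt (fun a => P (Sum.inl a)) + cnt (fun b => P (Sum.inr b)) := by
  rw [cnt_eq_card_subtype, cnt_eq_card_subtype, cnt_eq_card_subtype,
    Fintype.card_congr (Equiv.subtypeSum (p := P)), Fintype.card_sum]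

lemma cnt_fin_one (p : Fin 1 → Prop) : cnt p = if p 0 then 1 else 0 := by
  unfold cnt
  split_ifs with h
  · rw [Finset.filter_true_of_mem, Finset.card_univ]
    · simp
    · intro a _; rw [Fin.fin_one_eq_zero a]; exact h
  · rw [Finset.filter_false_of_mem, Finset.card_empty]
    intro a _; rw [Fin.fin_one_eq_zero a]; exact h

section StarAux
open BrushGame

lemma nbr_eq_cnt {V : Type*} [Fintype V] (G : SimpleGraph V) (x : V) (l : List V) :
    nbr G x l = cnt (fun u => G.Adj x u ∧ u ∈ l) := by
  unfold BrushGame.nbr cnt; congr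

lemma deg_eq_cnt {V : Type*} [Fintype V] (G : SimpleGraph V) (x : V) :
    deg G x = cnt (fun u => G.Adj x u) := by
  unfold BrushGame.deg cnt; congr

variable {n : ℕ}

noncomputable abbrev SG (n : ℕ) := completeBipartiteGraph (Fin 1) (Fin n)

def ctr (n : ℕ) : Fin 1 ⊕ Fin n := Sum.inl 0

lemma adj_ctr (u : Fin 1 ⊕ Fin n) : (SG n).Adj (ctr n) u ↔ u.isRight := by
  cases u <;> simp [ctr]

lemma adj_leaf (j : Fin n) (u : Fin 1 ⊕ Fin n) : (SG n).Adj (Sum.inr j) u ↔ u = ctr n := by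
  cases u with
  | inl a => simp [ctr, Fin.fin_one_eq_zero a]
  | inr b => simp [ctr]

lemma deg_ctr : deg (SG n) (ctr n) = n := by
  rw [deg_eq_cnt, cnt_sum]
  rw [cnt_eq_zero (p := fun a : Fin 1 => (SG n).Adj (ctr n) (Sum.inl a))
    (fun a => by simp [ctr])]
  rw [cnt_eq_card (fun b => by simp [ctr])]
  simp

lemma deg_leaf (j : Fin n) : deg (SG n) (Sum.inr j) = 1 := by
  rw [deg_eq_cnt, cnt_sum]
  rw [cnt_eq_zero (p := fun b : Fin n => (SG n).Adj (Sum.inr j) (Sum.inr b))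
    (fun b => by simp [ctr])]
  rw [cnt_fin_one]
  simp [adj_leaf, ctr]

lemma nbr_ctr (l : List (Fin 1 ⊕ Fin n)) :
    nbr (SG n) (ctr n) l = cnt (fun j : Fin n => (Sum.inr j : Fin 1 ⊕ Fin n) ∈ l) := by
  rw [nbr_eq_cnt, cnt_sum]
  rw [cnt_eq_zero (p := fun a : Fin 1 => (SG n).Adj (ctr n) (Sum.inl a) ∧ (Sum.inl a : Fin 1 ⊕ Fin n) ∈ l)
    (fun a => by simp [ctr])]
  rw [cnt_congr (q := fun j : Fin n => (Sum.inr j : Fin 1 ⊕ Fin n) ∈ l)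
    (fun b => by simp [ctr])]
  simp

lemma nbr_leaf_aux (j : Fin n) (l : List (Fin 1 ⊕ Fin n)) :
    nbr (SG n) (Sum.inr j) l = cnt (fun _ : Fin 1 => ctr n ∈ l) := by
  rw [nbr_eq_cnt, cnt_sum]
  rw [cnt_eq_zero (p := fun b : Fin n => (SG n).Adj (Sum.inr j) (Sum.inr b) ∧ (Sum.inr b : Fin 1 ⊕ Fin n) ∈ l)
    (fun b => by simp [ctr])]
  rw [add_zero]
  apply cnt_congr
  intro a
  have ha : a = 0 := Fin.fin_one_eq_zero a
  subst ha
  have : (SG n).Adj (Sum.inr j) (Sum.inl 0) := by rw [adj_leaf]; rfl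
  simp [this, ctr]

lemma nbr_leaf_pos (j : Fin n) (l : List (Fin 1 ⊕ Fin n)) (h : ctr n ∈ l) :
    nbr (SG n) (Sum.inr j) l = 1 := by
  rw [nbr_leaf_aux, cnt_eq_card (fun _ => h)]
  simp

lemma nbr_leaf_neg (j : Fin n) (l : List (Fin 1 ⊕ Fin n)) (h : ctr n ∉ l) :
    nbr (SG n) (Sum.inr j) l = 0 := by
  rw [nbr_leaf_aux, cnt_eq_zero (fun _ => h)]

/-- The number of leaves carrying at least one brush. -/
noncomputable def mm (c : Fin 1 ⊕ Fin n → ℕ) : ℕ := cnt (fun j : Fin n => c (Sum.inr j) ≠ 0)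

/-- The remaining deficit. -/
noncomputable def rr (c : Fin 1 ⊕ Fin n → ℕ) : ℕ := n - (c (ctr n) + 2 * mm c)

lemma firing_cond {V : Type*} [Fintype V] {G : SimpleGraph V} {c : V → ℕ} {l}
    (h : FiringSeq G c l) {i : ℕ} (hi : i < l.length) :
    deg G (l[i]) ≤ c (l[i]) + 2 * nbr G (l[i]) (l.take i) := by
  simpa using h.2 ⟨i, hi⟩

lemma leaf_pos_of_early {c : Fin 1 ⊕ Fin n → ℕ} {l} (h : FiringSeq (SG n) c l) {p : ℕ}
    (hp : p < l.length) {j : Fin n} (hj : l[p] = Sum.inr j) (hctr : ctr n ∉ l.take p) :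
    c (Sum.inr j) ≠ 0 := by
  have h2 := firing_cond h hp
  rw [hj, deg_leaf, nbr_leaf_neg _ _ hctr] at h2
  omega

lemma ctr_le_of_mem {c : Fin 1 ⊕ Fin n → ℕ} {l} (h : FiringSeq (SG n) c l)
    (hm : ctr n ∈ l) : n ≤ c (ctr n) + 2 * mm c := by
  obtain ⟨i, hi, hgi⟩ := List.mem_iff_getElem.mp hm
  have h2 := firing_cond h hi
  rw [hgi, deg_ctr, nbr_ctr] at h2
  have hsub : cnt (fun j : Fin n => (Sum.inr j : Fin 1 ⊕ Fin n) ∈ l.take i) ≤ mm c := by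
    apply cnt_le_cnt
    intro j hjmem
    obtain ⟨p, hp, hpj⟩ := List.mem_iff_getElem.mp hjmem
    have hplen : p < i ∧ p < l.length := by
      rw [List.length_take] at hp; omega
    have hpj' : l[p]'hplen.2 = Sum.inr j := by rw [← hpj]; exact List.getElem_take' hplen.2 hplen.1
    apply leaf_pos_of_early h hplen.2 hpj'
    intro hc
    obtain ⟨q, hq, hqc⟩ := List.mem_iff_getElem.mp hc
    have hqlen : q < p ∧ q < l.length := by
      rw [List.length_take] at hq; omega
    have hqc' : l[q]'hqlen.2 = ctr n := by rw [← hqc]; exact List.getElem_take' hqlen.2 hqlen.1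
    have : q = i := h.1.getElem_inj_iff.mp (by rw [hqc', hgi])
    omega
  omega

lemma FiringSeq.append_one {V : Type*} [Fintype V] {G : SimpleGraph V} {c : V → ℕ} {l : List V}
    {v : V} (h : FiringSeq G c l) (hv : v ∉ l)
    (hcond : deg G v ≤ c v + 2 * nbr G v l) : FiringSeq G c (l ++ [v]) := by
  constructor
  · simp [List.nodup_append, h.1, hv]
    intro a ha hav; exact hv (hav ▸ ha)
  · intro i
    have hilen : i.1 < l.length + 1 := by simpa using i.2
    rcases lt_or_ge i.1 l.length with hi | hi
    · have hget : (l ++ [v]).get i = l[i.1] := by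
        rw [List.get_eq_getElem]
        exact List.getElem_append_left hi
      have htake : (l ++ [v]).take i.1 = l.take i.1 := List.take_append_of_le_length (le_of_lt hi)
      rw [hget, htake]
      exact firing_cond h hi
    · have hie : i.1 = l.length := by omega
      have hget : (l ++ [v]).get i = v := by
        rw [List.get_eq_getElem]
        rw [List.getElem_append_right hi]
        simp [hie]
      have htake : (l ++ [v]).take i.1 = l := by rw [hie]; exact List.take_left
      rw [hget, htake]
      exact hcond

lemma leaves_seq (c : Fin 1 ⊕ Fin n → ℕ) (L : List (Fin n)) (hN : L.Nodup)
    (hc : ∀ j ∈ L, c (Sum.inr j) ≠ 0) : FiringSeq (SG n) c (L.map Sum.inr) := by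
  constructor
  · exact hN.map Sum.inr_injective
  · intro i
    have hlen : i.1 < L.length := by simpa using i.2
    have hget : (L.map Sum.inr).get i = Sum.inr (L[i.1]) := by
      rw [List.get_eq_getElem]; simp
    rw [hget, deg_leaf]
    have h1 : c (Sum.inr (L[i.1])) ≠ 0 := hc _ (List.getElem_mem hlen)
    exact le_trans (Nat.one_le_iff_ne_zero.mpr h1) (Nat.le_add_right _ _)

/-- The list of brush-carrying leaves. -/
noncomputable def baseSeq (c : Fin 1 ⊕ Fin n → ℕ) : List (Fin 1 ⊕ Fin n) :=
  (@Finset.filter (Fin n) (fun j => c (Sum.inr j) ≠ 0) (fun _ => Classical.propDecidable _)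
    Finset.univ).toList.map Sum.inr

lemma mem_baseSeq {c : Fin 1 ⊕ Fin n → ℕ} {u : Fin 1 ⊕ Fin n} :
    u ∈ baseSeq c ↔ ∃ j : Fin n, u = Sum.inr j ∧ c (Sum.inr j) ≠ 0 := by
  unfold baseSeq
  simp only [List.mem_map, Finset.mem_toList, Finset.mem_filter, Finset.mem_univ, true_and]
  constructor
  · rintro ⟨j, hj, rfl⟩; exact ⟨j, rfl, hj⟩
  · rintro ⟨j, rfl, hj⟩; exact ⟨j, hj, rfl⟩

lemma baseSeq_firing (c : Fin 1 ⊕ Fin n → ℕ) : FiringSeq (SG n) c (baseSeq c) := by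
  apply leaves_seq
  · exact Finset.nodup_toList _
  · intro j hj
    simpa using (Finset.mem_toList.mp hj)

lemma nbr_ctr_baseSeq (c : Fin 1 ⊕ Fin n → ℕ) : nbr (SG n) (ctr n) (baseSeq c) = mm c := by
  rw [nbr_ctr]
  apply cnt_congr
  intro j
  rw [mem_baseSeq]
  constructor
  · rintro ⟨j', hj', hc⟩
    rwa [Sum.inr_injective hj'] 
  · intro hj; exact ⟨j, rfl, hj⟩

lemma ctr_not_mem_baseSeq (c : Fin 1 ⊕ Fin n → ℕ) : ctr n ∉ baseSeq c := by
  rw [mem_baseSeq]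
  rintro ⟨j, hj, -⟩
  exact absurd hj (by simp [ctr])

/-- A firing sequence cleaning the centre. -/
noncomputable def ctrSeq (c : Fin 1 ⊕ Fin n → ℕ) : List (Fin 1 ⊕ Fin n) :=
  baseSeq c ++ [ctr n]

lemma ctrSeq_firing (c : Fin 1 ⊕ Fin n → ℕ) (h : n ≤ c (ctr n) + 2 * mm c) :
    FiringSeq (SG n) c (ctrSeq c) := by
  apply FiringSeq.append_one (baseSeq_firing c) (ctr_not_mem_baseSeq c)
  rw [deg_ctr, nbr_ctr_baseSeq]
  exact h

lemma cleaned_ctr_iff (c : Fin 1 ⊕ Fin n → ℕ) :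
    Cleaned (SG n) c (ctr n) ↔ n ≤ c (ctr n) + 2 * mm c := by
  constructor
  · rintro ⟨l, hl, hm⟩; exact ctr_le_of_mem hl hm
  · intro h
    exact ⟨ctrSeq c, ctrSeq_firing c h, by simp [ctrSeq]⟩

lemma cleaned_leaf_of_pos (c : Fin 1 ⊕ Fin n → ℕ) (j : Fin n) (h : c (Sum.inr j) ≠ 0) :
    Cleaned (SG n) c (Sum.inr j) := by
  refine ⟨[Sum.inr j], ⟨List.nodup_singleton _, fun i => ?_⟩, by simp⟩
  have : ([Sum.inr j] : List (Fin 1 ⊕ Fin n)).get i = Sum.inr j := by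
    rw [List.get_eq_getElem]; simp
  rw [this, deg_leaf]
  exact le_trans (Nat.one_le_iff_ne_zero.mpr h) (Nat.le_add_right _ _)

lemma cleaned_leaf_iff (c : Fin 1 ⊕ Fin n → ℕ) (h : ¬ n ≤ c (ctr n) + 2 * mm c) (j : Fin n) :
    Cleaned (SG n) c (Sum.inr j) ↔ c (Sum.inr j) ≠ 0 := by
  constructor
  · rintro ⟨l, hl, hm⟩
    rcases Classical.em (ctr n ∈ l) with hctr | hctr
    · exact absurd (ctr_le_of_mem hl hctr) h
    · obtain ⟨p, hp, hpj⟩ := List.mem_iff_getElem.mp hm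
      exact leaf_pos_of_early hl hp hpj (fun hc => hctr (List.mem_of_mem_take hc))
  · exact cleaned_leaf_of_pos c j

lemma over_iff (c : Fin 1 ⊕ Fin n → ℕ) :
    Over (SG n) c ↔ n ≤ c (ctr n) + 2 * mm c := by
  constructor
  · intro h; exact (cleaned_ctr_iff c).1 (h (ctr n))
  · intro h v
    match v with
    | Sum.inl a =>
      have : (Sum.inl a : Fin 1 ⊕ Fin n) = ctr n := by
        simp [ctr, Fin.fin_one_eq_zero a]
      rw [this]
      exact (cleaned_ctr_iff c).2 h
    | Sum.inr j =>
      by_cases hj : c (Sum.inr j) = 0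
      · refine ⟨ctrSeq c ++ [Sum.inr j], ?_, by simp⟩
        apply FiringSeq.append_one (ctrSeq_firing c h)
        · intro hmem
          rcases List.mem_append.mp hmem with hmem | hmem
          · rcases mem_baseSeq.mp hmem with ⟨j', hj', hcj'⟩
            rw [Sum.inr_injective hj'] at hj
            exact hcj' hj
          · simp [ctr] at hmem
        · rw [deg_leaf, nbr_leaf_pos _ _ (by simp [ctrSeq])]
          omega
      · exact cleaned_leaf_of_pos c j hj

lemma mm_update_ctr (inst : DecidableEq (Fin 1 ⊕ Fin n)) (c : Fin 1 ⊕ Fin n → ℕ) (x : ℕ) :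
    mm (@Function.update _ _ inst c (ctr n) x) = mm c := by
  apply cnt_congr
  intro j
  rw [Function.update_of_ne (by simp [ctr])]

lemma rr_update_ctr (inst : DecidableEq (Fin 1 ⊕ Fin n)) (c : Fin 1 ⊕ Fin n → ℕ) :
    rr (@Function.update _ _ inst c (ctr n) (c (ctr n) + 1)) = rr c - 1 := by
  unfold rr
  rw [mm_update_ctr, Function.update_self]
  omega

lemma mm_update_leaf (inst : DecidableEq (Fin 1 ⊕ Fin n)) (c : Fin 1 ⊕ Fin n → ℕ) (j : Fin n)
    (hj : c (Sum.inr j) = 0) :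
    mm (@Function.update _ _ inst c (Sum.inr j) (c (Sum.inr j) + 1)) = mm c + 1 := by
  unfold mm
  rw [cnt_congr (q := fun i : Fin n => c (Sum.inr i) ≠ 0 ∨ i = j)]
  · exact cnt_insert (by simp [hj])
  · intro i
    by_cases hij : i = j
    · subst hij
      rw [Function.update_self]
      simp [hj]
    · rw [Function.update_of_ne (by simp [hij])]
      simp [hij]

lemma rr_update_leaf (inst : DecidableEq (Fin 1 ⊕ Fin n)) (c : Fin 1 ⊕ Fin n → ℕ) (j : Fin n)
    (hj : c (Sum.inr j) = 0) :
    rr (@Function.update _ _ inst c (Sum.inr j) (c (Sum.inr j) + 1)) = rr c - 2 := by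
  unfold rr
  rw [mm_update_leaf inst c j hj, Function.update_of_ne (by simp [ctr])]
  omega

/-- Min's optimal sequence value. -/
def Af (r : ℕ) : ℕ := (2 * r + 1) / 3
/-- Max's optimal sequence value. -/
def Bf (r : ℕ) : ℕ := (2 * r + 2) / 3

lemma exists_dirty_leaf {c : Fin 1 ⊕ Fin n → ℕ} (h : ¬ n ≤ c (ctr n) + 2 * mm c) :
    ∃ j : Fin n, c (Sum.inr j) = 0 := by
  by_contra hcon
  push_neg at hcon
  have : mm c = n := by
    unfold mm; rw [cnt_eq_card hcon]; simp
  omega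

lemma min_set_eq (inst : DecidableEq (Fin 1 ⊕ Fin n)) (c : Fin 1 ⊕ Fin n → ℕ) (F : ℕ)
    (hover : ¬ n ≤ c (ctr n) + 2 * mm c) (hF : rr c ≤ F + 1)
    (hIH : ∀ c' : Fin 1 ⊕ Fin n → ℕ, rr c' ≤ F → val (SG n) false F c' = Bf (rr c')) :
    {k | ∃ v, ¬ Cleaned (SG n) c v ∧
        k = val (SG n) false F (@Function.update _ _ inst c v (c v + 1))} =
      {Bf (rr c - 1), Bf (rr c - 2)} := by
  ext x
  simp only [Set.mem_setOf_eq, Set.mem_insert_iff, Set.mem_singleton_iff]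
  constructor
  · rintro ⟨v, hv, rfl⟩
    match v with
    | Sum.inl a =>
      have ha : (Sum.inl a : Fin 1 ⊕ Fin n) = ctr n := by simp [ctr, Fin.fin_one_eq_zero a]
      rw [ha]
      left
      rw [hIH _ (by rw [rr_update_ctr]; omega), rr_update_ctr]
    | Sum.inr j =>
      have hj : c (Sum.inr j) = 0 := by
        by_contra hj
        exact hv (cleaned_leaf_of_pos c j hj)
      right
      rw [hIH _ (by rw [rr_update_leaf inst c j hj]; omega), rr_update_leaf inst c j hj]
  · have hctr_dirty : ¬ Cleaned (SG n) c (ctr n) := fun h => hover ((cleaned_ctr_iff c).1 h)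
    rintro (rfl | rfl)
    · exact ⟨ctr n, hctr_dirty,
        by rw [hIH _ (by rw [rr_update_ctr]; omega), rr_update_ctr]⟩
    · obtain ⟨j0, hj0⟩ := exists_dirty_leaf hover
      refine ⟨Sum.inr j0, ?_, ?_⟩
      · intro h
        exact absurd ((cleaned_leaf_iff c hover j0).1 h) (by simp [hj0])
      · rw [hIH _ (by rw [rr_update_leaf inst c j0 hj0]; omega), rr_update_leaf inst c j0 hj0]

lemma max_set_eq (inst : DecidableEq (Fin 1 ⊕ Fin n)) (c : Fin 1 ⊕ Fin n → ℕ) (F : ℕ)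
    (hover : ¬ n ≤ c (ctr n) + 2 * mm c) (hF : rr c ≤ F + 1)
    (hIH : ∀ c' : Fin 1 ⊕ Fin n → ℕ, rr c' ≤ F → val (SG n) true F c' = Af (rr c')) :
    {k | ∃ v, ¬ Cleaned (SG n) c v ∧
        k = val (SG n) true F (@Function.update _ _ inst c v (c v + 1))} =
      {Af (rr c - 1), Af (rr c - 2)} := by
  ext x
  simp only [Set.mem_setOf_eq, Set.mem_insert_iff, Set.mem_singleton_iff]
  constructor
  · rintro ⟨v, hv, rfl⟩
    match v with
    | Sum.inl a =>
      have ha : (Sum.inl a : Fin 1 ⊕ Fin n) = ctr n := by simp [ctr, Fin.fin_one_eq_zero a]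
      rw [ha]
      left
      rw [hIH _ (by rw [rr_update_ctr]; omega), rr_update_ctr]
    | Sum.inr j =>
      have hj : c (Sum.inr j) = 0 := by
        by_contra hj
        exact hv (cleaned_leaf_of_pos c j hj)
      right
      rw [hIH _ (by rw [rr_update_leaf inst c j hj]; omega), rr_update_leaf inst c j hj]
  · have hctr_dirty : ¬ Cleaned (SG n) c (ctr n) := fun h => hover ((cleaned_ctr_iff c).1 h)
    rintro (rfl | rfl)
    · exact ⟨ctr n, hctr_dirty,
        by rw [hIH _ (by rw [rr_update_ctr]; omega), rr_update_ctr]⟩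
    · obtain ⟨j0, hj0⟩ := exists_dirty_leaf hover
      refine ⟨Sum.inr j0, ?_, ?_⟩
      · intro h
        exact absurd ((cleaned_leaf_iff c hover j0).1 h) (by simp [hj0])
      · rw [hIH _ (by rw [rr_update_leaf inst c j0 hj0]; omega), rr_update_leaf inst c j0 hj0]

lemma val_eq : ∀ (F : ℕ) (c : Fin 1 ⊕ Fin n → ℕ), rr c ≤ F →
    val (SG n) true F c = Af (rr c) ∧ val (SG n) false F c = Bf (rr c) := by
  intro F
  induction F with
  | zero =>
    intro c hc
    have h0 : rr c = 0 := by omega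
    rw [h0]
    constructor <;> simp [val, Af, Bf]
  | succ F ih =>
    intro c hc
    by_cases hover : n ≤ c (ctr n) + 2 * mm c
    · have h0 : rr c = 0 := by unfold rr; omega
      have hO : Over (SG n) c := (over_iff c).2 hover
      rw [h0]
      constructor <;> · rw [val, if_pos hO]; simp [Af, Bf]
    · have h1 : 1 ≤ rr c := by unfold rr at *; omega
      have hnO : ¬ Over (SG n) c := fun h => hover ((over_iff c).1 h)
      constructor
      · rw [val, if_neg hnO, if_pos rfl]
        rw [min_set_eq _ c F hover hc (fun c' h => (ih c' h).2)]
        rw [csInf_pair]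
        have hmono : Bf (rr c - 2) ≤ Bf (rr c - 1) := by unfold Bf; omega
        rw [inf_eq_right.mpr hmono]
        unfold Af Bf
        omega
      · rw [val, if_neg hnO]
        simp only [Bool.false_eq_true, if_false]
        rw [max_set_eq _ c F hover hc (fun c' h => (ih c' h).1)]
        rw [csSup_pair]
        have hmono : Af (rr c - 2) ≤ Af (rr c - 1) := by unfold Af; omega
        rw [sup_eq_left.mpr hmono]
        unfold Af Bf
        omega

lemma rr_zero_fun : rr (n := n) (fun _ => 0) = n := by
  unfold rr mm
  rw [cnt_eq_zero (fun a => by simp)]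
  simp

lemma n_le_fuel : n ≤ fuel (SG n) := by
  unfold BrushGame.fuel
  have : deg (SG n) (ctr n) ≤ ∑ v, deg (SG n) v :=
    Finset.single_le_sum (fun v _ => Nat.zero_le _) (Finset.mem_univ _)
  rw [deg_ctr] at this
  omega

end StarAux

/-- For every positive integer `k`, the star `K_{1,3k−1}` satisfies
`bg(K_{1,3k−1}) = 2k − 1` and `b̂g(K_{1,3k−1}) = 2k`. -/
theorem game_brush_number_star (k : ℕ) (hk : 1 ≤ k) :
    BrushGame.bg (completeBipartiteGraph (Fin 1) (Fin (3 * k - 1))) = 2 * k - 1 ∧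
      BrushGame.bghat (completeBipartiteGraph (Fin 1) (Fin (3 * k - 1))) = 2 * k := by
  have hboth := val_eq (n := 3 * k - 1) (BrushGame.fuel (SG (3 * k - 1))) (fun _ => 0)
    (by rw [rr_zero_fun]; exact n_le_fuel)
  constructor
  · show BrushGame.val (SG (3 * k - 1)) true (BrushGame.fuel (SG (3 * k - 1))) (fun _ => 0)
      = 2 * k - 1
    rw [hboth.1, rr_zero_fun]
    unfold Af
    omega
  · show BrushGame.val (SG (3 * k - 1)) false (BrushGame.fuel (SG (3 * k - 1))) (fun _ => 0)
      = 2 * k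
    rw [hboth.2, rr_zero_fun]
    unfold Bf
    omega
end

section
/- For every finite simple graph G, the brush number b(G) is at least half the number of vertices of G of odd degree: 2·b(G) ≥ |{v ∈ V(G) : deg(v) is odd}|. -/
open Classical

open Classical Finset in
private lemma brush_aux {V : Type*} [Fintype V] (G : SimpleGraph V) (f : V → ℕ)
    (h : BrushGame.CleansBy G f) :
    (Finset.univ.filter (fun v => Odd (BrushGame.deg G v))).card ≤ 2 * ∑ v, f v := by
  classical
  obtain ⟨l, ⟨hnd, hfire⟩, hall⟩ := h
  set n := l.length with hn
  set e : Fin n → V := l.get with he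
  have hinj : Function.Injective e := List.nodup_iff_injective_get.mp hnd
  have hsurj : Function.Surjective e := fun v => List.mem_iff_get.mp (hall v)
  have hbij : Function.Bijective e := ⟨hinj, hsurj⟩
  set B : Fin n → ℕ := fun i => BrushGame.nbr G (e i) (l.take (i : ℕ)) with hB
  have hfire' : ∀ i : Fin n, BrushGame.deg G (e i) ≤ f (e i) + 2 * B i := hfire
  -- membership in take
  have htake : ∀ (i j : Fin n), e j ∈ l.take (i : ℕ) ↔ (j : ℕ) < (i : ℕ) := by
    intro i j
    rw [List.mem_take_iff_getElem]
    constructor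
    · rintro ⟨k, hk, hke⟩
      have hk' : k < n := lt_of_lt_of_le hk (min_le_right _ _)
      have : (⟨k, hk'⟩ : Fin n) = j := by
        apply hinj
        simpa [he, List.get_eq_getElem] using hke
      have hkj : k = (j : ℕ) := congrArg Fin.val this
      omega
    · intro hj
      exact ⟨(j : ℕ), by omega, by simp [he, List.get_eq_getElem]⟩
  -- reindex degree
  have hdeg : ∀ i : Fin n, BrushGame.deg G (e i)
      = ∑ j : Fin n, if G.Adj (e i) (e j) then 1 else 0 := by
    intro i
    rw [BrushGame.deg, Finset.card_filter]
    exact (Fintype.sum_bijective e hbij _ _ (fun j => rfl)).symm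
  have hBsum : ∀ i : Fin n, B i
      = ∑ j : Fin n, if G.Adj (e i) (e j) ∧ (j : ℕ) < (i : ℕ) then 1 else 0 := by
    intro i
    rw [hB]
    simp only
    rw [BrushGame.nbr, Finset.card_filter]
    rw [← (Fintype.sum_bijective e hbij _ _ (fun j => rfl))]
    refine Finset.sum_congr rfl fun j _ => ?_
    simp [htake i j]
  -- key double counting
  have hkey : ∑ i : Fin n, 2 * B i = ∑ i : Fin n, BrushGame.deg G (e i) := by
    have h2 : ∑ i : Fin n, B i
        = ∑ i : Fin n, ∑ j : Fin n, if G.Adj (e i) (e j) ∧ (i : ℕ) < (j : ℕ) then 1 else 0 := by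
      simp only [hBsum]
      rw [Finset.sum_comm]
      refine Finset.sum_congr rfl fun i _ => Finset.sum_congr rfl fun j _ => ?_
      congr 1
      simp only [eq_iff_iff]
      constructor
      · rintro ⟨ha, hb⟩; exact ⟨ha.symm, hb⟩
      · rintro ⟨ha, hb⟩; exact ⟨ha.symm, hb⟩
    calc ∑ i : Fin n, 2 * B i = ∑ i : Fin n, B i + ∑ i : Fin n, B i := by
          rw [← Finset.sum_add_distrib]
          exact Finset.sum_congr rfl fun i _ => two_mul (B i)
      _ = ∑ i : Fin n, ∑ j : Fin n,
            ((if G.Adj (e i) (e j) ∧ (j : ℕ) < (i : ℕ) then 1 else 0)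
              + (if G.Adj (e i) (e j) ∧ (i : ℕ) < (j : ℕ) then 1 else 0)) := by
          have hA1 : ∑ i : Fin n, B i
              = ∑ i : Fin n, ∑ j : Fin n,
                  (if G.Adj (e i) (e j) ∧ (j : ℕ) < (i : ℕ) then 1 else 0) :=
            Finset.sum_congr rfl fun i _ => hBsum i
          nth_rewrite 1 [hA1]
          rw [h2]
          simp only [Finset.sum_add_distrib]
      _ = ∑ i : Fin n, ∑ j : Fin n, (if G.Adj (e i) (e j) then 1 else 0) := by
          refine Finset.sum_congr rfl fun i _ => Finset.sum_congr rfl fun j _ => ?_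
          by_cases hA : G.Adj (e i) (e j)
          · have hne : (i : ℕ) ≠ (j : ℕ) := by
              intro hij
              have : i = j := Fin.ext hij
              subst this
              exact G.irrefl hA
            simp only [hA, true_and, if_pos]
            rcases Nat.lt_or_ge (i : ℕ) (j : ℕ) with h1 | h1
            · rw [if_neg (by omega), if_pos h1]
            · have h2 : (j : ℕ) < (i : ℕ) := by omega
              rw [if_pos h2, if_neg (by omega)]
          · simp [hA]
      _ = ∑ i : Fin n, BrushGame.deg G (e i) := by
          exact Finset.sum_congr rfl fun i _ => (hdeg i).symm
  -- surplus
  set s : Fin n → ℕ := fun i => f (e i) + 2 * B i - BrushGame.deg G (e i) with hs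
  have hsd : ∀ i, s i + BrushGame.deg G (e i) = f (e i) + 2 * B i := by
    intro i; have := hfire' i; rw [hs]; simp only; omega
  have hfe : ∑ i : Fin n, f (e i) = ∑ v, f v :=
    Fintype.sum_bijective e hbij _ _ (fun i => rfl)
  have hssum : ∑ i : Fin n, s i = ∑ v, f v := by
    have h1 : ∑ i : Fin n, (s i + BrushGame.deg G (e i))
        = ∑ i : Fin n, (f (e i) + 2 * B i) :=
      Finset.sum_congr rfl fun i _ => hsd i
    rw [Finset.sum_add_distrib, Finset.sum_add_distrib, hkey, hfe] at h1
    omega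
  have hcard : (Finset.univ.filter (fun v => Odd (BrushGame.deg G v))).card
      = ∑ i : Fin n, if Odd (BrushGame.deg G (e i)) then 1 else 0 := by
    rw [Finset.card_filter]
    exact (Fintype.sum_bijective e hbij _ _ (fun i => rfl)).symm
  have hpt : ∀ i : Fin n, (if Odd (BrushGame.deg G (e i)) then 1 else 0) ≤ f (e i) + s i := by
    intro i
    by_cases hodd : Odd (BrushGame.deg G (e i))
    · rw [if_pos hodd]
      have h1 := hsd i
      by_contra hc
      push_neg at hc
      have hf : f (e i) = 0 := by omega
      have hsz : s i = 0 := by omega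
      rw [hf, hsz] at h1
      exact (Nat.not_odd_iff_even.mpr ⟨B i, by omega⟩) hodd
    · simp [hodd]
  rw [hcard]
  calc (∑ i : Fin n, if Odd (BrushGame.deg G (e i)) then 1 else 0)
      ≤ ∑ i : Fin n, (f (e i) + s i) := Finset.sum_le_sum fun i _ => hpt i
    _ = ∑ i : Fin n, f (e i) + ∑ i : Fin n, s i := Finset.sum_add_distrib
    _ = ∑ v, f v + ∑ v, f v := by rw [hssum, hfe]
    _ = 2 * ∑ v, f v := (two_mul _).symm


open Classical in
/-- The brush number of a graph is at least half the number of vertices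
of odd degree: `2·b(G) ≥ |{v : deg(v) odd}|`. -/
theorem brush_number_ge_half_odd_degree {V : Type*} [Fintype V] (G : SimpleGraph V) :
    (Finset.univ.filter (fun v => Odd (BrushGame.deg G v))).card ≤ 2 * BrushGame.bNum G := by
  classical
  have hne : {k | ∃ f, BrushGame.CleansBy G f ∧ k = ∑ v, f v}.Nonempty := by
    refine ⟨∑ v, BrushGame.deg G v, fun v => BrushGame.deg G v,
      ⟨Finset.univ.toList, ⟨Finset.nodup_toList _, ?_⟩,
        fun v => Finset.mem_toList.mpr (Finset.mem_univ v)⟩, rfl⟩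
    intro i
    exact Nat.le_add_right _ _
  obtain ⟨f, hcf, hsum⟩ := Nat.sInf_mem hne
  have hb := brush_aux G f hcf
  rw [BrushGame.bNum, hsum]
  exact hb
end

section
/- In the k-chip-stacking game with n piles (k ≥ 1, n ≥ 1), if player 2 uses the greedy strategy, then regardless of player 1's play, no pile ever contains more than 2k·⌈log_{4/3} n + 1⌉ chips. -/
open Finset

private lemma harmonic_mono_chip : Monotone (fun s : ℕ => ((harmonic s : ℚ) : ℝ)) := by
  apply monotone_nat_of_le_succ
  intro m
  simp only [harmonic_succ]
  push_cast
  have : (0:ℝ) ≤ ((m:ℝ)+1)⁻¹ := by positivity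
  linarith


/-- In the `k`-chip-stacking game with `n` piles, if player 2 uses the
greedy strategy, then regardless of player 1's play no pile ever contains more than
`2k·⌈log_{4/3} n + 1⌉` chips.

Here `c t` is the pile configuration before round `t` (with `c 0 = 0`), in round `t`
player 1 adds the chips `a t` (totalling `k`) yielding the intermediate configuration
`d t`, and player 2 then greedily removes `min k (d t (j t))` chips from a largest pile
`j t`, yielding `c (t+1)`. -/
theorem chip_stacking_greedy_bound (k n : ℕ) (hk : 1 ≤ k) (hn : 1 ≤ n)
    (a : ℕ → Fin n → ℕ) (ha : ∀ t, ∑ i, a t i = k)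
    (j : ℕ → Fin n) (c d : ℕ → Fin n → ℕ)
    (hc0 : ∀ i, c 0 i = 0)
    (hd : ∀ t i, d t i = c t i + a t i)
    (hj : ∀ t i, d t i ≤ d t (j t))
    (hstep : ∀ t i, c (t + 1) i = if i = j t then d t i - k else d t i) :
    ∀ t i, c t i ≤ 2 * k * ⌈Real.logb (4 / 3) n + 1⌉₊ ∧
      d t i ≤ 2 * k * ⌈Real.logb (4 / 3) n + 1⌉₊ := by
  have hcard : ∀ S : Finset (Fin n), S.card ≤ n := by
    intro S
    simpa using S.card_le_univ
  have hHmono : ∀ {p q : ℕ}, p ≤ q → ((harmonic p : ℚ) : ℝ) ≤ ((harmonic q : ℚ) : ℝ) :=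
    fun h => harmonic_mono_chip h
  -- sum of a over any set is at most k
  have hsa : ∀ t (S : Finset (Fin n)), ∑ i ∈ S, a t i ≤ k := by
    intro t S
    calc ∑ i ∈ S, a t i ≤ ∑ i, a t i := Finset.sum_le_sum_of_subset (Finset.subset_univ S)
    _ = k := ha t
  -- key invariant
  have key : ∀ t (S : Finset (Fin n)), S.Nonempty →
      ((∑ i ∈ S, c t i : ℕ) : ℝ) ≤
        k * S.card * (1 + ((harmonic n : ℚ) : ℝ) - ((harmonic S.card : ℚ) : ℝ)) := by
    intro t
    induction t with
    | zero =>
      intro S hS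
      simp only [hc0, Finset.sum_const_zero, Nat.cast_zero]
      have h1 : ((harmonic S.card : ℚ) : ℝ) ≤ ((harmonic n : ℚ) : ℝ) := hHmono (hcard S)
      have hk' : (1:ℝ) ≤ k := by exact_mod_cast hk
      have hs1 : (1:ℝ) ≤ S.card := by exact_mod_cast hS.card_pos
      have h2 : (0:ℝ) ≤ (k:ℝ) * S.card * (1 + ((harmonic n : ℚ) : ℝ) - ((harmonic S.card : ℚ) : ℝ)) := by
        apply mul_nonneg (by positivity)
        linarith
      linarith
    | succ t ih =>
      intro S hS
      by_cases hjS : j t ∈ S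
      · -- player 2 removed from a pile in S
        have hsum : ∑ i ∈ S, c (t+1) i = (∑ i ∈ S.erase (j t), d t i) + (d t (j t) - k) := by
          rw [← Finset.sum_erase_add S _ hjS]
          congr 1
          · apply Finset.sum_congr rfl
            intro i hi
            rw [hstep t i, if_neg (Finset.ne_of_mem_erase hi)]
          · rw [hstep t (j t), if_pos rfl]
        by_cases hM : k ≤ d t (j t)
        · -- full removal: sum does not increase
          have h1 : ∑ i ∈ S, c (t+1) i ≤ ∑ i ∈ S, c t i := by
            have e1 : (∑ i ∈ S.erase (j t), d t i) + d t (j t) = ∑ i ∈ S, d t i :=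
              Finset.sum_erase_add S _ hjS
            have e2 : ∑ i ∈ S, d t i = (∑ i ∈ S, c t i) + ∑ i ∈ S, a t i := by
              rw [← Finset.sum_add_distrib]
              exact Finset.sum_congr rfl fun i _ => hd t i
            have e3 : ∑ i ∈ S, a t i ≤ k := hsa t S
            omega
          calc ((∑ i ∈ S, c (t+1) i : ℕ) : ℝ) ≤ ((∑ i ∈ S, c t i : ℕ) : ℝ) := by
                exact_mod_cast h1
            _ ≤ _ := ih S hS
        · -- the max pile is below k: everything is tiny
          push_neg at hM
          have hsmall : ∀ i ∈ S.erase (j t), d t i ≤ k - 1 := by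
            intro i _
            have := hj t i
            omega
          have h1 : ∑ i ∈ S, c (t+1) i ≤ (S.card - 1) * (k - 1) := by
            rw [hsum]
            have : (∑ i ∈ S.erase (j t), d t i) ≤ (S.erase (j t)).card * (k-1) := by
              calc (∑ i ∈ S.erase (j t), d t i) ≤ ∑ _i ∈ S.erase (j t), (k-1) :=
                    Finset.sum_le_sum hsmall
                _ = (S.erase (j t)).card * (k-1) := by rw [Finset.sum_const, smul_eq_mul]
            rw [Finset.card_erase_of_mem hjS] at this
            omega
          have h2 : (S.card - 1) * (k - 1) ≤ k * S.card := by
            calc (S.card - 1) * (k - 1) ≤ S.card * k := by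
                  exact Nat.mul_le_mul (Nat.sub_le _ _) (Nat.sub_le _ _)
              _ = k * S.card := Nat.mul_comm _ _
          have h3 : ((∑ i ∈ S, c (t+1) i : ℕ) : ℝ) ≤ (k : ℝ) * S.card := by
            have := h1.trans h2
            exact_mod_cast this
          have h4 : ((harmonic S.card : ℚ) : ℝ) ≤ ((harmonic n : ℚ) : ℝ) := hHmono (hcard S)
          have hk' : (0:ℝ) ≤ (k:ℝ) * S.card := by positivity
          nlinarith
      · -- player 2 removed from a pile outside S
        have hsum : ∑ i ∈ S, c (t+1) i = ∑ i ∈ S, d t i := by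
          apply Finset.sum_congr rfl
          intro i hi
          rw [hstep t i, if_neg (by rintro rfl; exact hjS hi)]
        set S' : Finset (Fin n) := insert (j t) S with hS'
        have hcardS' : S'.card = S.card + 1 := Finset.card_insert_of_notMem hjS
        have hsn : S.card + 1 ≤ n := by rw [← hcardS']; exact hcard S'
        -- (s+1) * ∑_S d ≤ s * ∑_{S'} d
        have hmax : ∑ i ∈ S, d t i ≤ S.card * d t (j t) := by
          calc ∑ i ∈ S, d t i ≤ ∑ _i ∈ S, d t (j t) := Finset.sum_le_sum fun i _ => hj t i
            _ = S.card * d t (j t) := by rw [Finset.sum_const, smul_eq_mul]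
        have hsplit : ∑ i ∈ S', d t i = d t (j t) + ∑ i ∈ S, d t i :=
          Finset.sum_insert hjS
        have hkey1 : (S.card + 1) * (∑ i ∈ S, d t i) ≤ S.card * (∑ i ∈ S', d t i) := by
          rw [hsplit]
          have := hmax
          nlinarith [hmax]
        have hS'c : ∑ i ∈ S', d t i ≤ (∑ i ∈ S', c t i) + k := by
          have e2 : ∑ i ∈ S', d t i = (∑ i ∈ S', c t i) + ∑ i ∈ S', a t i := by
            rw [← Finset.sum_add_distrib]
            exact Finset.sum_congr rfl fun i _ => hd t i
          have := hsa t S'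
          omega
        have hih : ((∑ i ∈ S', c t i : ℕ) : ℝ) ≤
            k * S'.card * (1 + ((harmonic n : ℚ) : ℝ) - ((harmonic S'.card : ℚ) : ℝ)) :=
          ih S' ⟨j t, Finset.mem_insert_self _ _⟩
        rw [hcardS'] at hih
        have hHsucc : ((harmonic (S.card + 1) : ℚ) : ℝ)
            = ((harmonic S.card : ℚ) : ℝ) + ((S.card : ℝ) + 1)⁻¹ := by
          rw [harmonic_succ]
          push_cast
          ring
        rw [hHsucc] at hih
        -- now combine in ℝ
        set s : ℝ := (S.card : ℝ) with hs
        have hspos : (0:ℝ) < s + 1 := by positivity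
        have hs0 : (0:ℝ) ≤ s := by positivity
        have hR1 : (s + 1) * ((∑ i ∈ S, d t i : ℕ) : ℝ)
            ≤ s * ((∑ i ∈ S', d t i : ℕ) : ℝ) := by
          rw [hs]
          exact_mod_cast hkey1
        have hR2 : ((∑ i ∈ S', d t i : ℕ) : ℝ) ≤ ((∑ i ∈ S', c t i : ℕ) : ℝ) + k := by
          have := hS'c
          push_cast
          exact_mod_cast this
        rw [hsum]
        have hfin : (s + 1) * (((∑ i ∈ S, d t i : ℕ)) : ℝ)
            ≤ (s + 1) * ((k:ℝ) * s * (1 + ((harmonic n : ℚ) : ℝ) - ((harmonic S.card : ℚ) : ℝ))) := by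
          have step : s * (((∑ i ∈ S', c t i : ℕ)) : ℝ) + s * k
              ≤ (s+1) * ((k:ℝ) * s * (1 + ((harmonic n : ℚ) : ℝ) - ((harmonic S.card : ℚ) : ℝ))) := by
            have expand : (k:ℝ) * ((s:ℝ) + 1) *
                (1 + ((harmonic n : ℚ) : ℝ) - (((harmonic S.card : ℚ) : ℝ) + (s + 1)⁻¹))
                = (k:ℝ) * (s+1) * (1 + ((harmonic n : ℚ) : ℝ) - ((harmonic S.card : ℚ) : ℝ))
                  - k := by
              field_simp
              ring
            have hih' : ((∑ i ∈ S', c t i : ℕ) : ℝ)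
                ≤ (k:ℝ) * (s+1) * (1 + ((harmonic n : ℚ) : ℝ) - ((harmonic S.card : ℚ) : ℝ)) - k := by
              calc ((∑ i ∈ S', c t i : ℕ) : ℝ)
                  ≤ (k:ℝ) * ((s:ℝ)+1) * (1 + ((harmonic n : ℚ) : ℝ)
                      - (((harmonic S.card : ℚ) : ℝ) + (s + 1)⁻¹)) := by
                    convert hih using 3
                    push_cast
                    ring
                _ = _ := expand
            nlinarith [hih']
          calc (s + 1) * (((∑ i ∈ S, d t i : ℕ)) : ℝ)
              ≤ s * ((∑ i ∈ S', d t i : ℕ) : ℝ) := hR1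
            _ ≤ s * (((∑ i ∈ S', c t i : ℕ) : ℝ) + k) := by nlinarith [hR2]
            _ = s * (((∑ i ∈ S', c t i : ℕ)) : ℝ) + s * k := by ring
            _ ≤ _ := step
        exact le_of_mul_le_mul_left hfin hspos
  -- conclusion
  have hn1 : (1:ℝ) ≤ (n:ℝ) := by exact_mod_cast hn
  have hlogn : (0:ℝ) ≤ Real.log n := Real.log_nonneg hn1
  have hl43 : (0:ℝ) < Real.log (4/3) := Real.log_pos (by norm_num)
  have hl43' : Real.log (4/3) ≤ 1/3 := by
    have := Real.log_le_sub_one_of_pos (show (0:ℝ) < 4/3 by norm_num)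
    linarith
  have hlogb : Real.log n ≤ 2 * Real.logb (4/3) n := by
    rw [Real.logb, div_eq_mul_inv]
    have h1 : (1:ℝ) ≤ 2 * (Real.log (4/3))⁻¹ := by
      rw [← div_eq_mul_inv]
      rw [le_div_iff₀ hl43]
      linarith
    nlinarith
  have hceil : Real.logb (4/3) n + 1 ≤ (⌈Real.logb (4/3) n + 1⌉₊ : ℝ) := Nat.le_ceil _
  have hHn : ((harmonic n : ℚ) : ℝ) ≤ 1 + Real.log n := harmonic_le_one_add_log n
  set L : ℕ := ⌈Real.logb (4/3) n + 1⌉₊ with hL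
  have hmain : ((harmonic n : ℚ) : ℝ) + 1 ≤ 2 * L := by
    have : Real.logb (4/3) n ≥ 0 := Real.logb_nonneg (by norm_num) hn1
    nlinarith
  have hk' : (1:ℝ) ≤ (k:ℝ) := by exact_mod_cast hk
  intro t i
  have hc : ((c t i : ℕ) : ℝ) ≤ (k:ℝ) * ((harmonic n : ℚ) : ℝ) := by
    have := key t {i} ⟨i, Finset.mem_singleton_self i⟩
    simp only [Finset.sum_singleton, Finset.card_singleton, Nat.cast_one] at this
    have hH1 : ((harmonic 1 : ℚ) : ℝ) = 1 := by norm_num [harmonic_succ]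
    rw [hH1] at this
    calc ((c t i : ℕ) : ℝ) ≤ (k:ℝ) * 1 * (1 + ((harmonic n : ℚ) : ℝ) - 1) := this
      _ = (k:ℝ) * ((harmonic n : ℚ) : ℝ) := by ring
  have hai : a t i ≤ k := by
    rw [← ha t]
    exact Finset.single_le_sum (fun i _ => Nat.zero_le _) (Finset.mem_univ i)
  have hdR : ((d t i : ℕ) : ℝ) ≤ (k:ℝ) * ((harmonic n : ℚ) : ℝ) + k := by
    rw [hd t i]
    push_cast
    have : ((a t i : ℕ) : ℝ) ≤ (k : ℝ) := by exact_mod_cast hai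
    linarith
  have hbound : (k:ℝ) * ((harmonic n : ℚ) : ℝ) + k ≤ ((2 * k * L : ℕ) : ℝ) := by
    push_cast
    nlinarith
  constructor
  · exact_mod_cast hc.trans (by nlinarith : (k:ℝ) * ((harmonic n : ℚ) : ℝ) ≤ ((2 * k * L : ℕ) : ℝ))
  · exact_mod_cast hdR.trans hbound
end

section
/- In the k-chip-stacking game with n piles, where k ≥ 1 and n ≥ 2, if player 2 uses the greedy strategy, then regardless of player 1's play, at no point in the game does the total number of chips in all piles exceed (n+1)·k. -/
/-- In the `k`-chip-stacking game with `n ≥ 2` piles, if player 2 uses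
the greedy strategy, then regardless of player 1's play the total number of chips in all
piles never exceeds `(n+1)·k`.

Here `c t` is the pile configuration before round `t` (with `c 0 = 0`), in round `t`
player 1 adds the chips `a t` (totalling `k`) yielding the intermediate configuration
`d t`, and player 2 then greedily removes `min k (d t (j t))` chips from a largest pile
`j t`, yielding `c (t+1)`. -/
theorem chip_stacking_total_bound (k n : ℕ) (hk : 1 ≤ k) (hn : 2 ≤ n)
    (a : ℕ → Fin n → ℕ) (ha : ∀ t, ∑ i, a t i = k)
    (j : ℕ → Fin n) (c d : ℕ → Fin n → ℕ)
    (hc0 : ∀ i, c 0 i = 0)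
    (hd : ∀ t i, d t i = c t i + a t i)
    (hj : ∀ t i, d t i ≤ d t (j t))
    (hstep : ∀ t i, c (t + 1) i = if i = j t then d t i - k else d t i) :
    ∀ t, (∑ i, c t i) ≤ (n + 1) * k ∧ (∑ i, d t i) ≤ (n + 1) * k := by
  have key : ∀ t, (∑ i, c t i) ≤ n * k := by
    intro t
    induction t with
    | zero => simp [hc0]
    | succ t ih =>
      have hsum_d : (∑ i, d t i) = (∑ i, c t i) + k := by
        simp [hd, Finset.sum_add_distrib, ha t]
      have hsplit : (∑ i, c (t+1) i)
          = (d t (j t) - k) + ∑ i ∈ Finset.univ.erase (j t), c (t+1) i := by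
        rw [← Finset.add_sum_erase _ _ (Finset.mem_univ (j t)), hstep t (j t)]
        simp
      have herase : ∀ i ∈ Finset.univ.erase (j t), c (t+1) i = d t i := by
        intro i hi
        rw [hstep, if_neg (Finset.ne_of_mem_erase hi)]
      have hcs : (∑ i ∈ Finset.univ.erase (j t), c (t+1) i)
          = ∑ i ∈ Finset.univ.erase (j t), d t i := Finset.sum_congr rfl herase
      have hdsplit : (∑ i, d t i)
          = d t (j t) + ∑ i ∈ Finset.univ.erase (j t), d t i := by
        rw [← Finset.add_sum_erase _ _ (Finset.mem_univ (j t))]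
      by_cases hcase : k ≤ d t (j t)
      · omega
      · push_neg at hcase
        have hb : ∑ i ∈ Finset.univ.erase (j t), d t i ≤ (n-1) * (k-1) := by
          calc ∑ i ∈ Finset.univ.erase (j t), d t i
              ≤ ∑ _i ∈ Finset.univ.erase (j t), (k-1) :=
                Finset.sum_le_sum (fun i _ => by have := hj t i; omega)
            _ = (n-1) * (k-1) := by
                rw [Finset.sum_const, smul_eq_mul,
                  Finset.card_erase_of_mem (Finset.mem_univ _), Finset.card_univ,
                  Fintype.card_fin]
        have hnk : (n-1)*(k-1) ≤ n*k := Nat.mul_le_mul (Nat.sub_le _ _) (Nat.sub_le _ _)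
        omega
  intro t
  have hsum_d : (∑ i, d t i) = (∑ i, c t i) + k := by
    simp [hd, Finset.sum_add_distrib, ha t]
  have hct := key t
  have hmul : (n + 1) * k = n * k + k := by ring
  omega
end

section
/- Let G be a finite simple graph and f : V(G) → ℕ a configuration by which G can be cleaned. Then every maximal sequence of vertex firings starting from f (i.e., every sequence of legal firings that cannot be extended by any further firing) cleans all vertices of G. -/
open Classical

lemma BrushGame.nbr_mono_s19 {V : Type*} [Fintype V] (G : SimpleGraph V) (x : V) {l₁ l₂ : List V}
    (h : ∀ u ∈ l₁, u ∈ l₂) : BrushGame.nbr G x l₁ ≤ BrushGame.nbr G x l₂ := by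
  apply Finset.card_le_card
  intro u hu
  simp only [Finset.mem_filter, Finset.mem_univ, true_and] at *
  exact ⟨hu.1, h u hu.2⟩

/-- If `G` can be cleaned by the configuration `f`, then every maximal
sequence of vertex firings starting from `f` (one that cannot be extended by any further
firing) cleans all vertices of `G`. -/
theorem maximal_firing_sequence_cleans {V : Type*} [Fintype V] (G : SimpleGraph V)
    (f : V → ℕ) (hclean : BrushGame.CleansBy G f)
    (l : List V) (hl : BrushGame.FiringSeq G f l)
    (hmax : ∀ v, ¬ BrushGame.FiringSeq G f (l ++ [v])) :
    ∀ v : V, v ∈ l := by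
  by_contra hcon
  push_neg at hcon
  obtain ⟨v, hv⟩ := hcon
  obtain ⟨m, hm, hall⟩ := hclean
  -- there is an index of m whose entry is not in l
  have hex : ∃ j, ∃ h : j < m.length, m[j] ∉ l := by
    obtain ⟨j, hj, hje⟩ := List.getElem_of_mem (hall v)
    exact ⟨j, hj, by rwa [hje]⟩
  classical
  let j := Nat.find hex
  obtain ⟨hjlt, hjnot⟩ : ∃ h : j < m.length, m[j] ∉ l := Nat.find_spec hex
  have hmin : ∀ k (hk : k < m.length), k < j → m[k] ∈ l := by
    intro k hk hkj
    by_contra hknot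
    exact absurd (Nat.find_le ⟨hk, hknot⟩) (not_le.mpr hkj)
  set x := m[j] with hx
  -- take of m up to j is contained in l
  have hsub : ∀ u ∈ m.take j, u ∈ l := by
    intro u hu
    obtain ⟨k, hk, hke⟩ := List.getElem_of_mem hu
    have hkj : k < j := lt_of_lt_of_le hk (le_trans (List.length_take_le _ _) le_rfl)
    have : (m.take j)[k] = m[k] := List.getElem_take ..
    rw [this] at hke
    subst hke
    exact hmin k (lt_of_lt_of_le hkj hjlt.le) hkj
  -- x can fire after l
  have hfire : BrushGame.deg G x ≤ f x + 2 * BrushGame.nbr G x l := by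
    have h1 := hm.2 ⟨j, hjlt⟩
    simp only [List.get_eq_getElem] at h1
    calc BrushGame.deg G x ≤ f x + 2 * BrushGame.nbr G x (m.take j) := h1
      _ ≤ f x + 2 * BrushGame.nbr G x l := by
          have := BrushGame.nbr_mono_s19 G x hsub
          omega
  apply hmax x
  constructor
  · rw [List.nodup_append]
    exact ⟨hl.1, List.nodup_singleton x, by simp; intro a ha hax; exact hjnot (hax ▸ ha)⟩
  · intro i
    have hilen : i.1 < l.length + 1 := by simpa using i.2
    rcases lt_or_eq_of_le (Nat.lt_succ_iff.mp hilen) with hi | hi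
    · have hget : (l ++ [x]).get i = l.get ⟨i.1, hi⟩ := by
        simp only [List.get_eq_getElem]
        exact List.getElem_append_left hi
      have htake : (l ++ [x]).take i.1 = l.take i.1 :=
        List.take_append_of_le_length hi.le
      rw [hget, htake]
      exact hl.2 ⟨i.1, hi⟩
    · have hget : (l ++ [x]).get i = x := by
        simp [List.get_eq_getElem, hi]
      have htake : (l ++ [x]).take i.1 = l := by
        rw [hi, List.take_append_of_le_length le_rfl, List.take_length]
      rw [hget, htake]
      exact hfire
end
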